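/- Let E and D be positive integers and define the simplified load-balancing loss L_bal(P) := ‖(1/N) Σ_{i=1}^{N} softmax(P(μ + ξ_i)) − (1/E)·𝟙‖₂² for a real E × D matrix P, μ ∈ ℝ^D, and ξ_1, …, ξ_N ∈ ℝ^D. There exists a constant C > 0, depending only on E, with the following property. For every positive integer N, every such P, μ, ξ_1, …, ξ_N with Σ_{i=1}^{N} ξ_i = 0, and every ε ∈ (0, 1], if max_{1 ≤ i ≤ N} ‖P(μ + ξ_i)‖₂ ≤ ε, then |L_bal(P) − (1/E²)·‖Π_E P μ‖₂²| ≤ C ε³. -/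

import Mathlib

open Matrix

/-- Coordinatewise softmax on Euclidean space ℝ^E. -/
noncomputable def softmax {E : ℕ} (z : EuclideanSpace ℝ (Fin E)) : EuclideanSpace ℝ (Fin E) :=
  WithLp.toLp 2 (fun e => Real.exp (z e) / ∑ j, Real.exp (z j))

/-- The all-ones vector 𝟙 ∈ ℝ^E. -/
def onesE (E : ℕ) : EuclideanSpace ℝ (Fin E) := WithLp.toLp 2 (fun _ => 1)

/-- The orthogonal projector onto the orthogonal complement of the all-ones vector:
`Π_E = I_E - (1/E) 𝟙𝟙ᵀ`. -/
noncomputable def projE (E : ℕ) : Matrix (Fin E) (Fin E) ℝ :=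
  1 - (E : ℝ)⁻¹ • vecMulVec (fun _ => 1) (fun _ => 1)

/-- Matrix acting on Euclidean space vectors. -/
noncomputable def matApp {E D : ℕ} (P : Matrix (Fin E) (Fin D) ℝ)
    (x : EuclideanSpace ℝ (Fin D)) : EuclideanSpace ℝ (Fin E) :=
  Matrix.toEuclideanLin P x

/-- The simplified load-balancing loss
`L_bal(P) = ‖(1/N) Σᵢ softmax(P(μ + ξᵢ)) − (1/E)𝟙‖₂²`. -/
noncomputable def Lbal {E D N : ℕ} (P : Matrix (Fin E) (Fin D) ℝ)
    (μ : EuclideanSpace ℝ (Fin D)) (ξ : Fin N → EuclideanSpace ℝ (Fin D)) : ℝ :=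
  ‖(N : ℝ)⁻¹ • (∑ i, softmax (matApp P (μ + ξ i))) - (E : ℝ)⁻¹ • onesE E‖ ^ 2

-- coordinate bound
lemma coord_abs_le {E : ℕ} (z : EuclideanSpace ℝ (Fin E)) (e : Fin E) : |z e| ≤ ‖z‖ := by
  have h : ‖z‖ = Real.sqrt (∑ j, (z j) ^ 2) := by
    rw [EuclideanSpace.norm_eq]
    congr 1
    refine Finset.sum_congr rfl fun j _ => ?_
    rw [Real.norm_eq_abs, sq_abs]
  rw [h]
  have h1 : (z e) ^ 2 ≤ ∑ j, (z j) ^ 2 :=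
    Finset.single_le_sum (fun j _ => sq_nonneg (z j)) (Finset.mem_univ e)
  calc |z e| = Real.sqrt ((z e) ^ 2) := (Real.sqrt_sq_eq_abs _).symm
    _ ≤ _ := Real.sqrt_le_sqrt h1

lemma norm_sq_eq_sum {E : ℕ} (z : EuclideanSpace ℝ (Fin E)) : ‖z‖ ^ 2 = ∑ j, (z j) ^ 2 := by
  rw [EuclideanSpace.norm_eq, Real.sq_sqrt (by positivity)]
  refine Finset.sum_congr rfl fun j _ => ?_
  rw [Real.norm_eq_abs, sq_abs]

/-- If each coordinate is bounded by `a`, the norm is bounded by `E * a`. -/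
lemma norm_le_of_coords {E : ℕ} (z : EuclideanSpace ℝ (Fin E)) (a : ℝ) (ha : 0 ≤ a)
    (h : ∀ e, |z e| ≤ a) : ‖z‖ ≤ (E : ℝ) * a := by
  have h2 : ‖z‖ ^ 2 ≤ ((E : ℝ) * a) ^ 2 := by
    rw [norm_sq_eq_sum]
    calc ∑ j, (z j) ^ 2 ≤ ∑ _j : Fin E, a ^ 2 := by
          refine Finset.sum_le_sum fun j _ => ?_
          rw [← sq_abs]
          exact pow_le_pow_left₀ (abs_nonneg _) (h j) 2
      _ = (E : ℝ) * a ^ 2 := by simp [mul_comm]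
      _ ≤ ((E : ℝ) * a) ^ 2 := by
          rw [mul_pow]
          have hE2 : (E : ℝ) ≤ (E : ℝ) ^ 2 := by
            have h0 : E ≤ E ^ 2 := Nat.le_self_pow (by norm_num) E
            exact_mod_cast h0
          nlinarith [sq_nonneg a]
  calc ‖z‖ = Real.sqrt (‖z‖ ^ 2) := by rw [Real.sqrt_sq (norm_nonneg _)]
    _ ≤ Real.sqrt (((E : ℝ) * a) ^ 2) := Real.sqrt_le_sqrt h2
    _ = (E : ℝ) * a := Real.sqrt_sq (by positivity)

lemma alg_id (a S T R ze re : ℝ) (hS : S = a + T + R) (ha : a ≠ 0) (hs : S ≠ 0) :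
    (1 + ze + re) / S - a⁻¹ - a⁻¹ * (ze - a⁻¹ * T)
      = (a * re - R - (T + R) * (ze - T / a)) / (a * S) := by
  subst hS
  field_simp
  ring

/-- Key second-order expansion of softmax, coordinatewise. -/
lemma softmax_coord_expand {E : ℕ} (hE : 0 < E) (z : EuclideanSpace ℝ (Fin E)) (hz : ‖z‖ ≤ 1)
    (e : Fin E) :
    |softmax z e - (E : ℝ)⁻¹ - (E : ℝ)⁻¹ * (z e - (E : ℝ)⁻¹ * ∑ j, z j)|
      ≤ ((9 * E + 9) / E ^ 2) * ‖z‖ ^ 2 := by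
  have hEpos : (0 : ℝ) < E := Nat.cast_pos.mpr hE
  have hE1 : (1 : ℝ) ≤ E := Nat.one_le_cast.mpr hE
  have hcoord : ∀ j, |z j| ≤ ‖z‖ := coord_abs_le z
  have hz1 : ∀ j, |z j| ≤ 1 := fun j => (hcoord j).trans hz
  set S := ∑ j, Real.exp (z j) with hSdef
  set r : Fin E → ℝ := fun j => Real.exp (z j) - 1 - z j with hrdef
  set T := ∑ j, z j with hTdef
  set R := ∑ j, r j with hRdef
  have hr : ∀ j, |r j| ≤ (z j) ^ 2 := fun j => Real.abs_exp_sub_one_sub_id_le (hz1 j)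
  have hnormsq : ∑ j, (z j) ^ 2 = ‖z‖ ^ 2 := (norm_sq_eq_sum z).symm
  have hT : |T| ≤ (E : ℝ) * ‖z‖ := by
    calc |T| ≤ ∑ j, |z j| := Finset.abs_sum_le_sum_abs _ _
      _ ≤ ∑ _j : Fin E, ‖z‖ := Finset.sum_le_sum fun j _ => hcoord j
      _ = (E : ℝ) * ‖z‖ := by simp [mul_comm]
  have hR : |R| ≤ ‖z‖ ^ 2 := by
    calc |R| ≤ ∑ j, |r j| := Finset.abs_sum_le_sum_abs _ _
      _ ≤ ∑ j, (z j) ^ 2 := Finset.sum_le_sum fun j _ => hr j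
      _ = ‖z‖ ^ 2 := hnormsq
  have h0 : R = S - E - T := by
    simp only [hRdef, hrdef, hSdef, hTdef]
    rw [Finset.sum_sub_distrib, Finset.sum_sub_distrib]
    simp
  have hS : S = E + T + R := by rw [h0]; ring
  have hS3 : (E : ℝ) / 3 ≤ S := by
    have h3 : ∀ j, (1 : ℝ) / 3 ≤ Real.exp (z j) := by
      intro j
      have h1 : (-1 : ℝ) ≤ z j := neg_le_of_abs_le (hz1 j)
      have h2 : Real.exp (-1 : ℝ) ≤ Real.exp (z j) := Real.exp_le_exp.mpr h1
      have h4 : Real.exp (1 : ℝ) ≤ 3 := by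
        have := Real.exp_one_lt_d9
        linarith
      have h5 : (1 : ℝ) / 3 ≤ Real.exp (-1 : ℝ) := by
        rw [Real.exp_neg]
        rw [div_le_iff₀ (by norm_num : (0:ℝ) < 3)]
        rw [inv_mul_eq_div, le_div_iff₀ (Real.exp_pos 1)]
        linarith
      linarith
    calc (E : ℝ) / 3 = ∑ _j : Fin E, (1 : ℝ) / 3 := by simp [mul_comm]; ring
      _ ≤ S := Finset.sum_le_sum fun j _ => h3 j
  have hSpos : (0 : ℝ) < S := lt_of_lt_of_le (by positivity) hS3
  have hSne : S ≠ 0 := ne_of_gt hSpos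
  have hEne : (E : ℝ) ≠ 0 := ne_of_gt hEpos
  -- the algebraic identity
  have hexp : Real.exp (z e) = 1 + z e + r e := by simp [hrdef]
  have hid : softmax z e - (E : ℝ)⁻¹ - (E : ℝ)⁻¹ * (z e - (E : ℝ)⁻¹ * T)
      = ((E : ℝ) * r e - R - (T + R) * (z e - T / E)) / ((E : ℝ) * S) := by
    have h1 : softmax z e = (1 + z e + r e) / S := by
      simp only [softmax, PiLp.toLp_apply, ← hSdef, hexp]
    rw [h1]
    exact alg_id (E : ℝ) S T R (z e) (r e) hS hEne hSne
  rw [hid]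
  have hnum : |(E : ℝ) * r e - R - (T + R) * (z e - T / E)| ≤ (3 * E + 3) * ‖z‖ ^ 2 := by
    have h1 : |(E : ℝ) * r e| ≤ (E : ℝ) * ‖z‖ ^ 2 := by
      rw [abs_mul, abs_of_nonneg (le_of_lt hEpos)]
      have : (z e) ^ 2 ≤ ‖z‖ ^ 2 := by
        rw [← sq_abs (z e)]
        exact pow_le_pow_left₀ (abs_nonneg _) (hcoord e) 2
      exact mul_le_mul_of_nonneg_left ((hr e).trans this) (le_of_lt hEpos)
    have h2 : |z e - T / E| ≤ 2 * ‖z‖ := by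
      have : |T / E| ≤ ‖z‖ := by
        rw [abs_div, abs_of_nonneg (le_of_lt hEpos)]
        rw [div_le_iff₀ hEpos]
        calc |T| ≤ (E : ℝ) * ‖z‖ := hT
          _ = ‖z‖ * E := by ring
      calc |z e - T / E| ≤ |z e| + |T / E| := abs_sub _ _
        _ ≤ ‖z‖ + ‖z‖ := add_le_add (hcoord e) this
        _ = 2 * ‖z‖ := by ring
    have h3 : |(T + R) * (z e - T / E)| ≤ ((E : ℝ) * ‖z‖ + ‖z‖ ^ 2) * (2 * ‖z‖) := by
      rw [abs_mul]
      have hTR : |T + R| ≤ (E : ℝ) * ‖z‖ + ‖z‖ ^ 2 := (abs_add_le _ _).trans (add_le_add hT hR)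
      exact mul_le_mul hTR h2 (abs_nonneg _) (by positivity)
    have hzz : ‖z‖ ^ 3 ≤ ‖z‖ ^ 2 := by
      nlinarith [norm_nonneg z, hz, sq_nonneg ‖z‖]
    calc |(E : ℝ) * r e - R - (T + R) * (z e - T / E)|
        ≤ |(E : ℝ) * r e| + |R| + |(T + R) * (z e - T / E)| := by
          calc _ ≤ |(E : ℝ) * r e - R| + |(T + R) * (z e - T / E)| := abs_sub _ _
            _ ≤ _ := by
                have := abs_sub ((E : ℝ) * r e) R
                linarith
      _ ≤ (E : ℝ) * ‖z‖ ^ 2 + ‖z‖ ^ 2 + ((E : ℝ) * ‖z‖ + ‖z‖ ^ 2) * (2 * ‖z‖) :=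
          add_le_add (add_le_add h1 hR) h3
      _ = (E : ℝ) * ‖z‖ ^ 2 + ‖z‖ ^ 2 + 2 * E * ‖z‖ ^ 2 + 2 * ‖z‖ ^ 3 := by ring
      _ ≤ (E : ℝ) * ‖z‖ ^ 2 + ‖z‖ ^ 2 + 2 * E * ‖z‖ ^ 2 + 2 * ‖z‖ ^ 2 := by linarith
      _ = (3 * E + 3) * ‖z‖ ^ 2 := by ring
  rw [abs_div, abs_of_nonneg ((mul_pos hEpos hSpos).le : (0:ℝ) ≤ (E : ℝ) * S)]
  rw [div_le_iff₀ (mul_pos hEpos hSpos : (0:ℝ) < (E : ℝ) * S)]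
  calc |(E : ℝ) * r e - R - (T + R) * (z e - T / E)| ≤ (3 * E + 3) * ‖z‖ ^ 2 := hnum
    _ ≤ (9 * E + 9) / E ^ 2 * ‖z‖ ^ 2 * ((E : ℝ) * (E / 3)) := by
        refine le_of_eq ?_
        rw [show (9 * (E:ℝ) + 9) / E ^ 2 * ‖z‖ ^ 2 * ((E : ℝ) * (E / 3))
            = (3 * E + 3) * ‖z‖ ^ 2 * (E ^ 2 / E ^ 2) from by ring]
        rw [div_self (by positivity), mul_one]
    _ ≤ (9 * E + 9) / E ^ 2 * ‖z‖ ^ 2 * ((E : ℝ) * S) := by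
        have : (0:ℝ) ≤ (9 * E + 9) / E ^ 2 * ‖z‖ ^ 2 := by positivity
        have h2 : (E : ℝ) * (E / 3) ≤ (E : ℝ) * S :=
          mul_le_mul_of_nonneg_left hS3 (le_of_lt hEpos)
        exact mul_le_mul_of_nonneg_left h2 this

lemma euclid_sum_apply {E : ℕ} {ι : Type*} (s : Finset ι) (f : ι → EuclideanSpace ℝ (Fin E))
    (e : Fin E) : (∑ i ∈ s, f i) e = ∑ i ∈ s, f i e := by
  classical
  induction s using Finset.induction_on with
  | empty => rfl
  | insert _ _ hx ih => rw [Finset.sum_insert hx, Finset.sum_insert hx, PiLp.add_apply, ih]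

/-- First-order (linear) part of the softmax expansion. -/
noncomputable def linPart {E : ℕ} (z : EuclideanSpace ℝ (Fin E)) : EuclideanSpace ℝ (Fin E) :=
  WithLp.toLp 2 (fun e => (E : ℝ)⁻¹ * (z e - (E : ℝ)⁻¹ * ∑ j, z j))

lemma matApp_apply {E D : ℕ} (P : Matrix (Fin E) (Fin D) ℝ) (x : EuclideanSpace ℝ (Fin D))
    (e : Fin E) : matApp P x e = ∑ j, P e j * x j := rfl

lemma linPart_eq_proj {E : ℕ} (hE : 0 < E) (w : EuclideanSpace ℝ (Fin E)) :
    linPart w = (E : ℝ)⁻¹ • matApp (projE E) w := by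
  ext e
  rw [PiLp.smul_apply, matApp_apply, linPart]
  simp only [PiLp.toLp_apply, projE, Matrix.sub_apply, Matrix.one_apply, Matrix.smul_apply, vecMulVec_apply,
    smul_eq_mul]
  have h2 : ∑ x : Fin E, ((if e = x then (1:ℝ) else 0) - (E:ℝ)⁻¹ * (1 * 1)) * w x
      = (∑ x : Fin E, (if e = x then (1:ℝ) else 0) * w x) - ∑ x : Fin E, (E:ℝ)⁻¹ * w x := by
    rw [← Finset.sum_sub_distrib]
    exact Finset.sum_congr rfl fun x _ => by ring
  rw [h2]
  have h1 : ∑ x : Fin E, (if e = x then (1:ℝ) else 0) * w x = w e := by simp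
  rw [h1, ← Finset.mul_sum]

lemma linPart_smul {E : ℕ} (c : ℝ) (z : EuclideanSpace ℝ (Fin E)) :
    linPart (c • z) = c • linPart z := by
  ext e
  simp only [linPart, PiLp.toLp_apply, PiLp.smul_apply, smul_eq_mul, Finset.mul_sum]
  rw [show ∑ i : Fin E, (E:ℝ)⁻¹ * (c * z i) = c * ∑ i : Fin E, (E:ℝ)⁻¹ * z i from by
    rw [Finset.mul_sum]; exact Finset.sum_congr rfl fun i _ => by ring]
  ring

lemma linPart_sum {E N : ℕ} (f : Fin N → EuclideanSpace ℝ (Fin E)) :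
    linPart (∑ i, f i) = ∑ i, linPart (f i) := by
  ext e
  simp only [linPart, PiLp.toLp_apply, euclid_sum_apply]
  rw [eq_comm, ← Finset.mul_sum]
  congr 1
  rw [Finset.sum_sub_distrib]
  congr 1
  rw [Finset.mul_sum, ← Finset.mul_sum, ← Finset.mul_sum, Finset.sum_comm]

lemma linPart_norm_le {E : ℕ} (hE : 0 < E) (w : EuclideanSpace ℝ (Fin E)) :
    ‖linPart w‖ ≤ 2 * ‖w‖ := by
  have hEpos : (0 : ℝ) < E := Nat.cast_pos.mpr hE
  have h := norm_le_of_coords (E := E) (linPart w) ((E : ℝ)⁻¹ * (2 * ‖w‖)) (by positivity)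
    (fun e => ?_)
  · calc ‖linPart w‖ ≤ (E : ℝ) * ((E : ℝ)⁻¹ * (2 * ‖w‖)) := h
      _ = 2 * ‖w‖ := by field_simp
  · rw [linPart, PiLp.toLp_apply, abs_mul, abs_of_nonneg (by positivity : (0:ℝ) ≤ (E:ℝ)⁻¹)]
    refine mul_le_mul_of_nonneg_left ?_ (by positivity)
    have h1 : |(E:ℝ)⁻¹ * ∑ j, w j| ≤ ‖w‖ := by
      rw [abs_mul, abs_of_nonneg (by positivity : (0:ℝ) ≤ (E:ℝ)⁻¹)]
      rw [inv_mul_le_iff₀ hEpos]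
      calc |∑ j, w j| ≤ ∑ j, |w j| := Finset.abs_sum_le_sum_abs _ _
        _ ≤ ∑ _j : Fin E, ‖w‖ := Finset.sum_le_sum fun j _ => coord_abs_le w j
        _ = (E : ℝ) * ‖w‖ := by simp [mul_comm]
    calc |w e - (E:ℝ)⁻¹ * ∑ j, w j| ≤ |w e| + |(E:ℝ)⁻¹ * ∑ j, w j| := abs_sub _ _
      _ ≤ ‖w‖ + ‖w‖ := add_le_add (coord_abs_le w e) h1
      _ = 2 * ‖w‖ := by ring

lemma softmax_remainder {E : ℕ} (hE : 0 < E) (z : EuclideanSpace ℝ (Fin E)) (hz : ‖z‖ ≤ 1) :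
    ‖softmax z - (E : ℝ)⁻¹ • onesE E - linPart z‖ ≤ ((E : ℝ) * ((9 * E + 9) / E ^ 2)) * ‖z‖ ^ 2 := by
  have h := norm_le_of_coords (softmax z - (E : ℝ)⁻¹ • onesE E - linPart z)
    (((9 * E + 9) / E ^ 2) * ‖z‖ ^ 2) (by positivity) (fun e => ?_)
  · calc _ ≤ (E : ℝ) * (((9 * E + 9) / E ^ 2) * ‖z‖ ^ 2) := h
      _ = _ := by ring
  · rw [PiLp.sub_apply, PiLp.sub_apply, PiLp.smul_apply]
    have h1 : ((E : ℝ)⁻¹ • onesE E) e = (E : ℝ)⁻¹ := by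
      simp [onesE]
    simp only [onesE, PiLp.toLp_apply, smul_eq_mul, mul_one]
    exact softmax_coord_expand hE z hz e

set_option maxHeartbeats 1000000 in
theorem stmt9 (E D : ℕ) (hE : 0 < E) (hD : 0 < D) :
    ∃ C > (0 : ℝ),
      ∀ (N : ℕ), 0 < N →
      ∀ (P : Matrix (Fin E) (Fin D) ℝ) (μ : EuclideanSpace ℝ (Fin D))
        (ξ : Fin N → EuclideanSpace ℝ (Fin D)), (∑ i, ξ i) = 0 →
      ∀ ε : ℝ, 0 < ε → ε ≤ 1 →
      (∀ i : Fin N, ‖matApp P (μ + ξ i)‖ ≤ ε) →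
      |Lbal P μ ξ - (E : ℝ)⁻¹ ^ 2 * ‖matApp (projE E) (matApp P μ)‖ ^ 2| ≤ C * ε ^ 3 := by
  have hEpos : (0 : ℝ) < E := Nat.cast_pos.mpr hE
  set B : ℝ := (E : ℝ) * ((9 * E + 9) / E ^ 2) with hBdef
  have hBpos : 0 < B := by positivity
  refine ⟨4 * B + B ^ 2 + 1, by positivity, ?_⟩
  intro N hN P μ ξ hξ ε hε0 hε1 hbd
  have hNpos : (0 : ℝ) < N := Nat.cast_pos.mpr hN
  set z : Fin N → EuclideanSpace ℝ (Fin E) := fun i => matApp P (μ + ξ i) with hzdef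
  have hz1 : ∀ i, ‖z i‖ ≤ 1 := fun i => (hbd i).trans hε1
  set w : EuclideanSpace ℝ (Fin E) := matApp P μ with hwdef
  -- the mean of the z i equals w
  have hmean : (N : ℝ)⁻¹ • ∑ i, z i = w := by
    have h1 : ∑ i, z i = (N : ℝ) • w := by
      have h2 : ∑ i, z i = matApp P (∑ i, (μ + ξ i)) := by
        simp only [hzdef, matApp, map_sum]
      rw [h2]
      have h3 : ∑ i, (μ + ξ i) = (N : ℝ) • μ := by
        rw [Finset.sum_add_distrib, hξ, add_zero, Finset.sum_const, Finset.card_univ,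
          Fintype.card_fin, Nat.cast_smul_eq_nsmul]
      rw [h3, matApp, _root_.map_smul]
      rfl
    rw [h1, smul_smul, inv_mul_cancel₀ (ne_of_gt hNpos), one_smul]
  have hwnorm : ‖w‖ ≤ ε := by
    rw [← hmean]
    rw [norm_smul, Real.norm_eq_abs, abs_of_nonneg (by positivity : (0:ℝ) ≤ (N:ℝ)⁻¹)]
    rw [inv_mul_le_iff₀ hNpos]
    calc ‖∑ i, z i‖ ≤ ∑ i, ‖z i‖ := norm_sum_le _ _
      _ ≤ ∑ _i : Fin N, ε := Finset.sum_le_sum fun i _ => hbd i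
      _ = (N : ℝ) * ε := by simp [mul_comm]
  -- remainder terms
  set g : Fin N → EuclideanSpace ℝ (Fin E) :=
    fun i => softmax (z i) - (E : ℝ)⁻¹ • onesE E - linPart (z i) with hgdef
  have hg : ∀ i, ‖g i‖ ≤ B * ε ^ 2 := by
    intro i
    calc ‖g i‖ ≤ B * ‖z i‖ ^ 2 := softmax_remainder hE (z i) (hz1 i)
      _ ≤ B * ε ^ 2 := by
          refine mul_le_mul_of_nonneg_left ?_ (le_of_lt hBpos)
          exact pow_le_pow_left₀ (norm_nonneg _) (hbd i) 2
  set r : EuclideanSpace ℝ (Fin E) := (N : ℝ)⁻¹ • ∑ i, g i with hrdef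
  have hrnorm : ‖r‖ ≤ B * ε ^ 2 := by
    rw [hrdef, norm_smul, Real.norm_eq_abs, abs_of_nonneg (by positivity : (0:ℝ) ≤ (N:ℝ)⁻¹)]
    rw [inv_mul_le_iff₀ hNpos]
    calc ‖∑ i, g i‖ ≤ ∑ i, ‖g i‖ := norm_sum_le _ _
      _ ≤ ∑ _i : Fin N, B * ε ^ 2 := Finset.sum_le_sum fun i _ => hg i
      _ = (N : ℝ) * (B * ε ^ 2) := by simp [mul_comm]
  set v : EuclideanSpace ℝ (Fin E) := linPart w with hvdef
  have hvnorm : ‖v‖ ≤ 2 * ε := by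
    calc ‖v‖ ≤ 2 * ‖w‖ := linPart_norm_le hE w
      _ ≤ 2 * ε := by linarith
  -- decomposition
  have hdecomp : (N : ℝ)⁻¹ • (∑ i, softmax (z i)) - (E : ℝ)⁻¹ • onesE E = v + r := by
    have h1 : ∀ i, softmax (z i) = (E : ℝ)⁻¹ • onesE E + linPart (z i) + g i := by
      intro i
      ext e
      simp only [hgdef, PiLp.add_apply, PiLp.sub_apply]
      ring
    rw [Finset.sum_congr rfl fun i _ => h1 i]
    rw [Finset.sum_add_distrib, Finset.sum_add_distrib, Finset.sum_const, Finset.card_univ,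
      Fintype.card_fin]
    rw [smul_add, smul_add]
    have h2 : (N : ℝ)⁻¹ • (N • ((E : ℝ)⁻¹ • onesE E)) = (E : ℝ)⁻¹ • onesE E := by
      rw [← Nat.cast_smul_eq_nsmul ℝ, smul_smul, inv_mul_cancel₀ (ne_of_gt hNpos), one_smul]
    have h3 : (N : ℝ)⁻¹ • ∑ i, linPart (z i) = v := by
      rw [← linPart_sum, ← linPart_smul, hmean]
    rw [h2, h3, ← hrdef]
    abel
  -- conclude
  have hLbal : Lbal P μ ξ = ‖v + r‖ ^ 2 := by
    unfold Lbal
    rw [show (∑ i, softmax (matApp P (μ + ξ i))) = ∑ i, softmax (z i) from rfl, hdecomp]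
  have hquad : (E : ℝ)⁻¹ ^ 2 * ‖matApp (projE E) w‖ ^ 2 = ‖v‖ ^ 2 := by
    rw [hvdef, linPart_eq_proj hE, norm_smul, Real.norm_eq_abs,
      abs_of_nonneg (by positivity : (0:ℝ) ≤ (E:ℝ)⁻¹), mul_pow]
  rw [hLbal, hquad]
  rw [norm_add_sq_real]
  set IP : ℝ := inner ℝ v r with hIP
  have heq : ‖v‖ ^ 2 + 2 * IP + ‖r‖ ^ 2 - ‖v‖ ^ 2 = 2 * IP + ‖r‖ ^ 2 := by ring
  rw [heq]
  have h1 : |IP| ≤ ‖v‖ * ‖r‖ := abs_real_inner_le_norm v r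
  have hinner : |2 * IP + ‖r‖ ^ 2| ≤ 2 * ‖v‖ * ‖r‖ + ‖r‖ ^ 2 := by
    have h2 : |‖r‖ ^ 2| = ‖r‖ ^ 2 := abs_of_nonneg (by positivity)
    calc |2 * IP + ‖r‖ ^ 2| ≤ |2 * IP| + |‖r‖ ^ 2| := abs_add_le _ _
      _ = 2 * |IP| + ‖r‖ ^ 2 := by rw [abs_mul, h2, abs_two]
      _ ≤ 2 * (‖v‖ * ‖r‖) + ‖r‖ ^ 2 := by linarith
      _ = 2 * ‖v‖ * ‖r‖ + ‖r‖ ^ 2 := by ring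
  have hrn : 0 ≤ ‖r‖ := norm_nonneg _
  have hvn : 0 ≤ ‖v‖ := norm_nonneg _
  have hb1 : 2 * ‖v‖ * ‖r‖ ≤ 2 * (2 * ε) * (B * ε ^ 2) := by
    have h := mul_le_mul hvnorm hrnorm hrn (by linarith)
    calc 2 * ‖v‖ * ‖r‖ = 2 * (‖v‖ * ‖r‖) := by ring
      _ ≤ 2 * (2 * ε * (B * ε ^ 2)) := by linarith
      _ = 2 * (2 * ε) * (B * ε ^ 2) := by ring
  have hb2 : ‖r‖ ^ 2 ≤ (B * ε ^ 2) ^ 2 := pow_le_pow_left₀ hrn hrnorm 2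
  have hε4 : ε ^ 4 ≤ ε ^ 3 := pow_le_pow_of_le_one (le_of_lt hε0) hε1 (by norm_num)
  have hε3 : (0 : ℝ) ≤ ε ^ 3 := by positivity
  calc |2 * IP + ‖r‖ ^ 2| ≤ 2 * ‖v‖ * ‖r‖ + ‖r‖ ^ 2 := hinner
    _ ≤ 2 * (2 * ε) * (B * ε ^ 2) + (B * ε ^ 2) ^ 2 := add_le_add hb1 hb2
    _ = 4 * B * ε ^ 3 + B ^ 2 * ε ^ 4 := by ring
    _ ≤ 4 * B * ε ^ 3 + B ^ 2 * ε ^ 3 := by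
        have h := mul_le_mul_of_nonneg_left hε4 (sq_nonneg B)
        linarith
    _ = (4 * B + B ^ 2) * ε ^ 3 := by ring
    _ ≤ (4 * B + B ^ 2 + 1) * ε ^ 3 := by
        refine mul_le_mul_of_nonneg_right (by linarith) hε3
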